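/- Let m ≥ 1 and let x_1, …, x_{m+1} ∈ ℂ with x_i ≠ 1 for every i. Define the m×m complex tridiagonal matrix A by: A_{ii} = (1 − x_i·x_{i+1}) / ((1−x_i)(1−x_{i+1})) for 1 ≤ i ≤ m; A_{i,i+1} = −1/(1−x_{i+1}) and A_{i+1,i} = −x_{i+1}/(1−x_{i+1}) for 1 ≤ i ≤ m−1; and A_{ij} = 0 whenever |i−j| ≥ 2. Then det A = (1 − x_1·x_2⋯x_{m+1}) / ∏_{i=1}^{m+1} (1 − x_i). -/
import Mathlib


open Complex

private noncomputable def trid (m : ℕ) (x : Fin (m + 1) → ℂ) : Matrix (Fin m) (Fin m) ℂ :=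
  Matrix.of fun i j : Fin m =>
    if i = j then
      (1 - x i.castSucc * x i.succ) / ((1 - x i.castSucc) * (1 - x i.succ))
    else if (j : ℕ) = (i : ℕ) + 1 then -1 / (1 - x j.castSucc)
    else if (i : ℕ) = (j : ℕ) + 1 then -(x i.castSucc) / (1 - x i.castSucc)
    else 0

private lemma key : ∀ m (x : Fin (m + 1) → ℂ), (∀ i, x i ≠ 1) →
    (trid m x).det = (1 - ∏ i, x i) / ∏ i, (1 - x i) := by
  intro m
  induction m using Nat.strong_induction_on with
  | _ m ih =>
  match m with
  | 0 =>
    intro x hx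
    have h0 : (1 : ℂ) - x 0 ≠ 0 := sub_ne_zero.2 (hx 0).symm
    simp [trid, Matrix.det_fin_zero, Fin.prod_univ_one, div_self h0]
  | 1 =>
    intro x hx
    rw [Matrix.det_fin_one]
    simp [trid, Fin.prod_univ_two]
  | (n+2) =>
    intro x hx
    set y : Fin (n + 2) → ℂ := fun i => x i.succ with hy
    set z : Fin (n + 1) → ℂ := fun i => x i.succ.succ with hz
    have h1 := ih (n+1) (by omega) y (fun i => hx _)
    have h2 := ih n (by omega) z (fun i => hx _)
    have hsub0 : (trid (n+2) x).submatrix Fin.succ (Fin.succAbove 0) = trid (n+1) y := by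
      ext i j
      simp only [Matrix.submatrix_apply, Fin.succAbove_zero, trid, Matrix.of_apply, hy,
        Fin.succ_inj, Fin.val_succ, add_left_inj, ← Fin.succ_castSucc]
    have hcol : ∀ j : Fin n, (1 : Fin (n+2)).succAbove j.succ = j.succ.succ := by
      intro j
      simp [Fin.succAbove, Fin.lt_def]
    set N := (trid (n+2) x).submatrix Fin.succ (Fin.succAbove 1) with hN
    have hsub1 : N.submatrix (Fin.succAbove 0) Fin.succ = trid n z := by
      ext i j
      simp only [hN, Matrix.submatrix_apply, Fin.succAbove_zero, hcol, trid, Matrix.of_apply, hz,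
        Fin.succ_inj, Fin.val_succ, add_left_inj, ← Fin.succ_castSucc]
    -- det N via first-column expansion
    have hNdet : N.det = (-(x 1) / (1 - x 1)) * (trid n z).det := by
      rw [Matrix.det_succ_column_zero, Fin.sum_univ_succ, hsub1]
      have hzero : ∀ i : Fin n, N i.succ 0 = 0 := by
        intro i
        simp [hN, trid, Fin.succAbove, Fin.ext_iff, Fin.lt_def, Fin.val_succ]
      have hN00 : N 0 0 = -(x 1) / (1 - x 1) := by
        simp [hN, trid, Fin.succAbove, Fin.ext_iff, Fin.lt_def]
      simp [hzero, hN00]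
    have h0 : (1:ℂ) - x 0 ≠ 0 := sub_ne_zero.2 (hx 0).symm
    have h1x : (1:ℂ) - x 1 ≠ 0 := sub_ne_zero.2 (hx 1).symm
    have hQ : ∏ i, ((1:ℂ) - z i) ≠ 0 :=
      Finset.prod_ne_zero_iff.2 fun i _ => sub_ne_zero.2 (hx _).symm
    have e1 : (0 : Fin (n+1)).succ = (1 : Fin (n+2)) := by ext; simp
    have hM00 : trid (n+2) x 0 0 = (1 - x 0 * x 1) / ((1 - x 0) * (1 - x 1)) := by
      simp [trid]
    have hM01 : trid (n+2) x 0 (0 : Fin (n+1)).succ = -1 / (1 - x 1) := by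
      have : ((0 : Fin (n+1)).succ.castSucc : Fin (n+3)) = 1 := by ext; simp
      simp [trid, this, Fin.ext_iff]
    have htail : ∀ j : Fin n, trid (n+2) x 0 j.succ.succ = 0 := by
      intro j
      simp [trid, Fin.ext_iff, Fin.val_succ]
    have e2 : (0 : Fin (n+2)).succ = (1 : Fin (n+3)) := by ext; simp
    have py : ∏ i, y i = x 1 * ∏ i, z i := by
      simp only [hy, hz, Fin.prod_univ_succ, e2]
    have py' : ∏ i, ((1:ℂ) - y i) = (1 - x 1) * ∏ i, ((1:ℂ) - z i) := by
      simp only [hy, hz, Fin.prod_univ_succ, e2]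
    have px : ∏ i, x i = x 0 * (x 1 * ∏ i, z i) := by
      rw [Fin.prod_univ_succ, ← py]
    have px' : ∏ i, ((1:ℂ) - x i) = (1 - x 0) * ((1 - x 1) * ∏ i, ((1:ℂ) - z i)) := by
      rw [Fin.prod_univ_succ, ← py']
    rw [Matrix.det_succ_row_zero, Fin.sum_univ_succ, Fin.sum_univ_succ]
    rw [hsub0, h1, hM00, hM01, e1]
    rw [show ((trid (n+2) x).submatrix Fin.succ (Fin.succAbove 1)).det = N.det from rfl, hNdet, h2]
    simp only [htail, mul_zero, zero_mul, Finset.sum_const_zero, add_zero,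
      Fin.val_zero, pow_zero, one_mul, Fin.val_one, pow_one, neg_one_mul]
    rw [py, py', px, px']
    field_simp
    ring

theorem det_tridiagonal_intersection_matrix (m : ℕ) (hm : 1 ≤ m)
    (x : Fin (m + 1) → ℂ) (hx : ∀ i, x i ≠ 1) :
    Matrix.det (Matrix.of fun i j : Fin m =>
        if i = j then
          (1 - x i.castSucc * x i.succ) / ((1 - x i.castSucc) * (1 - x i.succ))
        else if (j : ℕ) = (i : ℕ) + 1 then -1 / (1 - x j.castSucc)
        else if (i : ℕ) = (j : ℕ) + 1 then -(x i.castSucc) / (1 - x i.castSucc)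
        else 0)
      = (1 - ∏ i, x i) / ∏ i, (1 - x i) := by
  exact key m x hx
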